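/- Let N be a W×W symmetric nonnegative matrix with zero diagonal whose associated graph (edges where N_{ij} > 0) is connected and non-bipartite. Let s ∈ R^W with s > 0 entrywise. If x ∈ R^W with x > 0 entrywise satisfies Σ_j N_{ij}(x_i x_j - s_i s_j) x_j = 0 for all i = 1,...,W, then x = s. -/

import Mathlib

/-- For a symmetric nonnegative weight matrix `N` with zero diagonal whose associated graph
(edges where `N_{ij} > 0`) is connected and non-bipartite (has an odd cycle), the only
entrywise-positive stationary point of the weighted rank-one loss is `x = s`. -/
theorem stmt7 (W : ℕ) (N : Matrix (Fin W) (Fin W) ℝ)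
    (hsymm : ∀ i j, N i j = N j i) (hnonneg : ∀ i j, 0 ≤ N i j)
    (hdiag : ∀ i, N i i = 0)
    (G : SimpleGraph (Fin W)) (hadj : ∀ i j, G.Adj i j ↔ i ≠ j ∧ 0 < N i j)
    (hconn : G.Connected)
    (hodd : ∃ (v : Fin W) (p : G.Walk v v), p.IsCycle ∧ Odd p.length)
    (s x : Fin W → ℝ) (hs : ∀ i, 0 < s i) (hx : ∀ i, 0 < x i)
    (hstat : ∀ i, ∑ j, N i j * (x i * x j - s i * s j) * x j = 0) :
    x = s := by
  haveI : Nonempty (Fin W) := hconn.nonempty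
  set r : Fin W → ℝ := fun i => x i / s i with hrdef
  have hrpos : ∀ i, 0 < r i := fun i => div_pos (hx i) (hs i)
  have hfac : ∀ i j, x i * x j - s i * s j = s i * s j * (r i * r j - 1) := by
    intro i j
    have hsi := (hs i).ne'
    have hsj := (hs j).ne'
    simp only [hrdef]
    field_simp
  have hN0 : ∀ i j, ¬ G.Adj i j → N i j = 0 := by
    intro i j h
    rcases eq_or_ne i j with rfl | hne
    · exact hdiag i
    · by_contra h0
      exact h ((hadj i j).2 ⟨hne, lt_of_le_of_ne (hnonneg i j) (Ne.symm h0)⟩)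
  have hterm : ∀ i j, N i j * (x i * x j - s i * s j) * x j
      = N i j * x j * (s i * s j) * (r i * r j - 1) := by
    intro i j; rw [hfac]; ring
  -- Lemma A : if all adjacent products are ≥ 1, then all are = 1
  have lemA : ∀ i, (∀ j, G.Adj i j → 1 ≤ r i * r j) → ∀ j, G.Adj i j → r i * r j = 1 := by
    intro i hgei j hj
    have hnn : ∀ k ∈ Finset.univ, 0 ≤ N i k * (x i * x k - s i * s k) * x k := by
      intro k _
      rw [hterm]
      by_cases h : G.Adj i k
      · have h1 := hgei k h
        have : (0:ℝ) ≤ N i k * x k * (s i * s k) :=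
          mul_nonneg (mul_nonneg (hnonneg i k) (hx k).le) (mul_nonneg (hs i).le (hs k).le)
        nlinarith
      · rw [hN0 i k h]; ring_nf; simp
    have hz := (Finset.sum_eq_zero_iff_of_nonneg hnn).1 (hstat i) j (Finset.mem_univ j)
    rw [hterm] at hz
    have hNpos := ((hadj i j).1 hj).2
    have hpre : 0 < N i j * x j * (s i * s j) :=
      mul_pos (mul_pos hNpos (hx j)) (mul_pos (hs i) (hs j))
    rcases mul_eq_zero.1 hz with h | h
    · exact absurd h (ne_of_gt hpre)
    · linarith
  -- Lemma A' : if all adjacent products are ≤ 1, then all are = 1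
  have lemA' : ∀ i, (∀ j, G.Adj i j → r i * r j ≤ 1) → ∀ j, G.Adj i j → r i * r j = 1 := by
    intro i hlei j hj
    have hnp : ∀ k ∈ Finset.univ, N i k * (x i * x k - s i * s k) * x k ≤ 0 := by
      intro k _
      rw [hterm]
      by_cases h : G.Adj i k
      · have h1 := hlei k h
        have : (0:ℝ) ≤ N i k * x k * (s i * s k) :=
          mul_nonneg (mul_nonneg (hnonneg i k) (hx k).le) (mul_nonneg (hs i).le (hs k).le)
        nlinarith
      · rw [hN0 i k h]; ring_nf; simp
    have hz := (Finset.sum_eq_zero_iff_of_nonpos hnp).1 (hstat i) j (Finset.mem_univ j)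
    rw [hterm] at hz
    have hNpos := ((hadj i j).1 hj).2
    have hpre : 0 < N i j * x j * (s i * s j) :=
      mul_pos (mul_pos hNpos (hx j)) (mul_pos (hs i) (hs j))
    rcases mul_eq_zero.1 hz with h | h
    · exact absurd h (ne_of_gt hpre)
    · linarith
  -- an edge exists
  have hedge : ∃ a b : Fin W, G.Adj a b := by
    obtain ⟨v, p, hc, ho⟩ := hodd
    cases p with
    | nil => simp [Nat.odd_iff] at ho
    | cons h q => exact ⟨_, _, h⟩
  -- every vertex has a neighbor
  have hnbr : ∀ i, ∃ j, G.Adj i j := by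
    obtain ⟨a, b, hab⟩ := hedge
    intro i
    have hw : ∃ w, w ≠ i := by
      rcases eq_or_ne a i with rfl | h
      · exact ⟨b, (G.ne_of_adj hab).symm⟩
      · exact ⟨a, h⟩
    obtain ⟨w, hwi⟩ := hw
    obtain ⟨p⟩ := hconn.preconnected i w
    cases p with
    | nil => exact absurd rfl hwi
    | cons h q => exact ⟨_, h⟩
  -- max and min of r
  set M : ℝ := Finset.univ.sup' Finset.univ_nonempty r with hMdef
  set m : ℝ := Finset.univ.inf' Finset.univ_nonempty r with hmdef
  have hle : ∀ i, r i ≤ M := fun i => Finset.le_sup' r (Finset.mem_univ i)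
  have hge : ∀ i, m ≤ r i := fun i => Finset.inf'_le r (Finset.mem_univ i)
  obtain ⟨i0, -, hMi0⟩ := Finset.exists_mem_eq_sup' (Finset.univ_nonempty) r
  obtain ⟨i1, -, hmi1⟩ := Finset.exists_mem_eq_inf' (Finset.univ_nonempty) r
  have hMi0' : M = r i0 := hMdef.trans hMi0
  have hmi1' : m = r i1 := hmdef.trans hmi1
  have hMpos : 0 < M := by rw [hMi0']; exact hrpos i0
  have hmpos : 0 < m := by rw [hmi1']; exact hrpos i1
  -- m * M ≤ 1
  have hub : m * M ≤ 1 := by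
    by_cases hcase : ∀ j, G.Adj i0 j → 1 ≤ r i0 * r j
    · obtain ⟨j0, hj0⟩ := hnbr i0
      have h1 := lemA i0 hcase j0 hj0
      nlinarith [hge j0, hrpos j0, hrpos i0, hMi0']
    · push_neg at hcase
      obtain ⟨j, hj, hlt⟩ := hcase
      nlinarith [hge j, hrpos j, hrpos i0, hMi0']
  -- 1 ≤ m * M
  have hlb : 1 ≤ m * M := by
    by_cases hcase : ∀ j, G.Adj i1 j → r i1 * r j ≤ 1
    · obtain ⟨j0, hj0⟩ := hnbr i1
      have h1 := lemA' i1 hcase j0 hj0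
      nlinarith [hle j0, hrpos j0, hrpos i1, hmi1']
    · push_neg at hcase
      obtain ⟨j, hj, hlt⟩ := hcase
      nlinarith [hle j, hrpos j, hrpos i1, hmi1']
  have hmM : m * M = 1 := le_antisymm hub hlb
  -- neighbors of max vertices are min vertices, and vice versa
  have flipM : ∀ i j, G.Adj i j → r i = M → r j = m := by
    intro i j hij hiM
    have hall : ∀ k, G.Adj i k → 1 ≤ r i * r k := by
      intro k hk
      have := hge k
      nlinarith [hrpos k]
    have h1 := lemA i hall j hij
    have h2 : M * r j = M * m := by rw [← hiM]; nlinarith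
    exact mul_left_cancel₀ (ne_of_gt hMpos) h2
  have flipm : ∀ i j, G.Adj i j → r i = m → r j = M := by
    intro i j hij him
    have hall : ∀ k, G.Adj i k → r i * r k ≤ 1 := by
      intro k hk
      have := hle k
      nlinarith [hrpos k]
    have h1 := lemA' i hall j hij
    have h2 : m * r j = m * M := by rw [← him]; nlinarith
    exact mul_left_cancel₀ (ne_of_gt hmpos) h2
  -- parity propagation along walks
  have key : ∀ (a b : Fin W) (p : G.Walk a b), (r a = M ∨ r a = m) →
      (Even p.length → r b = r a) ∧ (¬ Even p.length → r b = M + m - r a) := by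
    intro a b p
    induction p with
    | nil =>
      intro _
      exact ⟨fun _ => rfl, fun he => absurd (by simp) he⟩
    | @cons u c w h q ih =>
      intro hmem
      have hflip : r c = M + m - r u ∧ (r c = M ∨ r c = m) := by
        rcases hmem with hM | hm
        · have := flipM _ _ h hM
          exact ⟨by rw [this, hM]; ring, Or.inr this⟩
        · have := flipm _ _ h hm
          exact ⟨by rw [this, hm]; ring, Or.inl this⟩
      have ihq := ih hflip.2
      constructor
      · intro he
        have he' : ¬ Even q.length := by
          simpa [SimpleGraph.Walk.length_cons, Nat.even_add_one] using he
        rw [ihq.2 he', hflip.1]; ring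
      · intro he
        have he' : Even q.length := by
          have := (Nat.even_add_one (n := q.length)).not.1
          simp only [SimpleGraph.Walk.length_cons, Nat.even_add_one, not_not] at he
          exact he
        rw [ihq.1 he', hflip.1]
  -- every vertex has r = M or r = m
  have hall : ∀ v, r v = M ∨ r v = m := by
    intro v
    obtain ⟨p⟩ := hconn.preconnected i0 v
    have hk := key i0 v p (Or.inl hMi0'.symm)
    by_cases he : Even p.length
    · left; rw [hk.1 he, ← hMi0']
    · right; rw [hk.2 he, ← hMi0']; ring
  -- odd cycle forces M = m
  obtain ⟨v, p, hc, ho⟩ := hodd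
  have hv := hall v
  have hne : ¬ Even p.length := Nat.not_even_iff_odd.2 ho
  have h2 : r v = M + m - r v := (key v v p hv).2 hne
  have hMm : M = m := by
    rcases hv with h | h
    · rw [h] at h2; linarith
    · rw [h] at h2; linarith
  -- conclude M = m = 1
  have hM1 : M = 1 := by
    have hz : (M - 1) * (M + 1) = 0 := by nlinarith
    rcases mul_eq_zero.1 hz with h | h
    · linarith
    · linarith
  funext i
  have hri : r i = 1 := by
    have h1 := hle i
    have h2 := hge i
    linarith [hMm]
  have hsi := (hs i).ne'
  have : x i / s i = 1 := hri
  field_simp at this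
  exact this
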